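/- S¹-reduction of Chaplygin's marble to (a, γ)-variables: let Ω : ℝ → ℝ³ be continuous and L, γ : ℝ → ℝ³ differentiable with L̇ = L × Ω, γ̇ = γ × Ω, and ⟨γ(0), γ(0)⟩ = 1. Then ⟨γ(t), γ(t)⟩ = 1 for all t, ℓ₃ := ⟨L(t), γ(t)⟩ is constant in t, and the vector a(t) := γ(t) × L(t) satisfies L(t) = a(t) × γ(t) + ℓ₃ γ(t) and the reduced equation ȧ(t) = −⟨Ω(t), L(t)⟩ γ(t) + ⟨γ(t), Ω(t)⟩ L(t) = −2H γ(t) + ⟨γ(t), Ω(t)⟩ (a × γ + ℓ₃ γ), where 2H = ⟨Ω, L⟩. -/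

import Mathlib

open Matrix

/-- Euclidean inner product on ℝ³. -/
def dot3 (u v : Fin 3 → ℝ) : ℝ := u 0 * v 0 + u 1 * v 1 + u 2 * v 2

/-- Cross product on ℝ³. -/
def cross3 (u v : Fin 3 → ℝ) : Fin 3 → ℝ :=
  ![u 1 * v 2 - u 2 * v 1, u 2 * v 0 - u 0 * v 2, u 0 * v 1 - u 1 * v 0]

/-- **S¹-reduction of Chaplygin's marble to `(a, γ)`-variables.**  If `L̇ = L × Ω`,
`γ̇ = γ × Ω` and `⟨γ(0),γ(0)⟩ = 1`, then `⟨γ(t),γ(t)⟩ = 1` for all `t`,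
`ℓ₃ = ⟨L,γ⟩` is constant, and `a := γ × L` satisfies `L = a × γ + ℓ₃γ` and
`ȧ = −⟨Ω,L⟩γ + ⟨γ,Ω⟩L = −2Hγ + ⟨γ,Ω⟩(a × γ + ℓ₃γ)`. -/
theorem marble_s1_reduction
    (Ω : ℝ → Fin 3 → ℝ) (hΩ : Continuous Ω)
    (L γ : ℝ → Fin 3 → ℝ)
    (hL : ∀ t, HasDerivAt L (cross3 (L t) (Ω t)) t)
    (hγ : ∀ t, HasDerivAt γ (cross3 (γ t) (Ω t)) t)
    (hγ0 : dot3 (γ 0) (γ 0) = 1) :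
    (∀ t, dot3 (γ t) (γ t) = 1) ∧
    (∀ s t, dot3 (L s) (γ s) = dot3 (L t) (γ t)) ∧
    (∀ t, L t = cross3 (cross3 (γ t) (L t)) (γ t) + dot3 (L t) (γ t) • γ t) ∧
    (∀ t, HasDerivAt (fun s => cross3 (γ s) (L s))
        (-(dot3 (Ω t) (L t)) • γ t + dot3 (γ t) (Ω t) • L t) t) ∧
    (∀ t, -(dot3 (Ω t) (L t)) • γ t + dot3 (γ t) (Ω t) • L t
        = -(dot3 (Ω t) (L t)) • γ t
          + dot3 (γ t) (Ω t)
              • (cross3 (cross3 (γ t) (L t)) (γ t) + dot3 (L t) (γ t) • γ t)) := by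
  have hLc : ∀ (i : Fin 3) t, HasDerivAt (fun s => L s i) (cross3 (L t) (Ω t) i) t :=
    fun i t => (hasDerivAt_pi.mp (hL t)) i
  have hγc : ∀ (i : Fin 3) t, HasDerivAt (fun s => γ s i) (cross3 (γ t) (Ω t) i) t :=
    fun i t => (hasDerivAt_pi.mp (hγ t)) i
  -- derivative of ⟨γ,γ⟩ is 0
  have hnd : ∀ t, HasDerivAt (fun s => dot3 (γ s) (γ s)) 0 t := by
    intro t
    have h := (((hγc 0 t).mul (hγc 0 t)).add ((hγc 1 t).mul (hγc 1 t))).add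
      ((hγc 2 t).mul (hγc 2 t))
    convert h using 1
    · rfl
    · rfl
    · rfl
    simp [cross3]; ring
  have hnconst : ∀ s t, dot3 (γ s) (γ s) = dot3 (γ t) (γ t) := by
    have hdiff : Differentiable ℝ fun s => dot3 (γ s) (γ s) :=
      fun t => (hnd t).differentiableAt
    have hzero : ∀ t, deriv (fun s => dot3 (γ s) (γ s)) t = 0 :=
      fun t => (hnd t).deriv
    exact fun s t => is_const_of_deriv_eq_zero hdiff hzero s t
  have hunit : ∀ t, dot3 (γ t) (γ t) = 1 := fun t => (hnconst t 0).trans hγ0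
  -- derivative of ⟨L,γ⟩ is 0
  have hld : ∀ t, HasDerivAt (fun s => dot3 (L s) (γ s)) 0 t := by
    intro t
    have h := (((hLc 0 t).mul (hγc 0 t)).add ((hLc 1 t).mul (hγc 1 t))).add
      ((hLc 2 t).mul (hγc 2 t))
    convert h using 1
    · rfl
    · rfl
    · rfl
    simp [cross3]; ring
  have hlconst : ∀ s t, dot3 (L s) (γ s) = dot3 (L t) (γ t) := by
    have hdiff : Differentiable ℝ fun s => dot3 (L s) (γ s) :=
      fun t => (hld t).differentiableAt
    exact fun s t => is_const_of_deriv_eq_zero hdiff (fun t => (hld t).deriv) s t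
  -- decomposition identity
  have hdec : ∀ t, L t = cross3 (cross3 (γ t) (L t)) (γ t) + dot3 (L t) (γ t) • γ t := by
    intro t
    have h1 := hunit t
    simp only [dot3] at h1
    funext i
    fin_cases i
    · simp [cross3, dot3]; linear_combination (-(L t 0)) * h1
    · simp [cross3, dot3]; linear_combination (-(L t 1)) * h1
    · simp [cross3, dot3]; linear_combination (-(L t 2)) * h1
  refine ⟨hunit, hlconst, hdec, ?_, ?_⟩
  · intro t
    rw [hasDerivAt_pi]
    intro i
    fin_cases i
    · have h := ((hγc 1 t).mul (hLc 2 t)).sub ((hγc 2 t).mul (hLc 1 t))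
      convert h using 1
      · rfl
      simp [cross3, dot3]; ring
    · have h := ((hγc 2 t).mul (hLc 0 t)).sub ((hγc 0 t).mul (hLc 2 t))
      convert h using 1
      · rfl
      simp [cross3, dot3]; ring
    · have h := ((hγc 0 t).mul (hLc 1 t)).sub ((hγc 1 t).mul (hLc 0 t))
      convert h using 1
      · rfl
      simp [cross3, dot3]; ring
  · intro t
    rw [← hdec t]
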